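/- There exists a universal constant C > 0 with the following property. Let k ≥ 2 and N ≥ 2 be integers, and let c : {1,…,k} × ℕ → ℕ be a finitely supported function with Σ_{i,j} c(i,j) = N. Define β_{i,j} := c(i,j)·2^j, T := Σ_{i,j} β_{i,j}, and the probability vector α_{i,j} := β_{i,j}/T. Then H(α) := Σ_{i,j} α_{i,j}·log₂(1/α_{i,j}) ≤ C·(log₂ k + log₂ log₂ N). -/

import Mathlib

set_option maxHeartbeats 1000000
open Finset

lemma nat_weight_mono {m n : ℕ} (hm : 1 ≤ m) (h : m ≤ n) : n * 2 ^ m ≤ m * 2 ^ n := by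
  obtain ⟨d, rfl⟩ := Nat.exists_eq_add_of_le h
  have h2 : d + 1 ≤ 2 ^ d := d.lt_two_pow_self
  have h3 : m + d ≤ m * (d + 1) := by nlinarith
  calc (m + d) * 2 ^ m ≤ (m * (d + 1)) * 2 ^ m := Nat.mul_le_mul_right _ h3
    _ ≤ (m * 2 ^ d) * 2 ^ m := Nat.mul_le_mul_right _ (Nat.mul_le_mul_left _ h2)
    _ = m * 2 ^ (m + d) := by rw [pow_add]; ring

lemma gibbs {ι : Type*} (s : Finset ι) (a q : ι → ℝ)
    (ha : ∀ x ∈ s, 0 < a x) (hq : ∀ x ∈ s, 0 < q x)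
    (ha1 : ∑ x ∈ s, a x = 1) (hq1 : ∑ x ∈ s, q x ≤ 1) :
    ∑ x ∈ s, a x * Real.logb 2 (a x)⁻¹ ≤ ∑ x ∈ s, a x * Real.logb 2 (q x)⁻¹ := by
  have key : ∑ x ∈ s, a x * Real.log (a x)⁻¹ ≤ ∑ x ∈ s, a x * Real.log (q x)⁻¹ := by
    have h1 : ∀ x ∈ s, a x * Real.log (a x)⁻¹ - a x * Real.log (q x)⁻¹ ≤ q x - a x := by
      intro x hx
      have hax := ha x hx
      have hqx := hq x hx
      have hlog : Real.log (q x / a x) ≤ q x / a x - 1 :=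
        Real.log_le_sub_one_of_pos (by positivity)
      have heq : a x * Real.log (a x)⁻¹ - a x * Real.log (q x)⁻¹
          = a x * Real.log (q x / a x) := by
        rw [Real.log_inv, Real.log_inv, Real.log_div (ne_of_gt hqx) (ne_of_gt hax)]
        ring
      rw [heq]
      calc a x * Real.log (q x / a x) ≤ a x * (q x / a x - 1) :=
            mul_le_mul_of_nonneg_left hlog hax.le
        _ = q x - a x := by field_simp
    have := Finset.sum_le_sum h1
    rw [Finset.sum_sub_distrib, Finset.sum_sub_distrib, ha1] at this
    linarith
  have hlog2 : (0:ℝ) < Real.log 2 := Real.log_pos (by norm_num)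
  simp only [Real.logb, mul_div_assoc']
  rw [← Finset.sum_div, ← Finset.sum_div]
  gcongr

theorem stmt_8 : ∃ C : ℝ, 0 < C ∧
    ∀ (k N : ℕ), 2 ≤ k → 2 ≤ N →
    ∀ c : (Fin k × ℕ) →₀ ℕ, (∑ x ∈ c.support, c x) = N →
    ∀ T : ℝ, T = ∑ x ∈ c.support, ((c x * 2 ^ x.2 : ℕ) : ℝ) →
    (∑ x ∈ c.support,
        (((c x * 2 ^ x.2 : ℕ) : ℝ) / T) *
          Real.logb 2 ((((c x * 2 ^ x.2 : ℕ) : ℝ) / T)⁻¹))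
      ≤ C * (Real.logb 2 k + Real.logb 2 (Real.logb 2 N)) := by
  classical
  refine ⟨8, by norm_num, ?_⟩
  intro k N hk hN c hc T hT
  set s := c.support with hs
  -- nonemptiness
  have hsne : s.Nonempty := by
    rcases Finset.eq_empty_or_nonempty s with h | h
    · rw [h, Finset.sum_empty] at hc; omega
    · exact h
  set J := s.sup Prod.snd with hJdef
  have hJle : ∀ x ∈ s, x.2 ≤ J := fun x hx => Finset.le_sup hx
  obtain ⟨x₀, hx₀s, hx₀⟩ := Finset.exists_mem_eq_sup s hsne Prod.snd
  set L := Nat.log 2 N + 1 with hLdef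
  have hNL : N < 2 ^ L := Nat.lt_pow_succ_log_self (by norm_num) N
  have hL1 : 1 ≤ L := by omega
  have hcx : ∀ x ∈ s, 1 ≤ c x := fun x hx =>
    Nat.one_le_iff_ne_zero.2 (Finsupp.mem_support_iff.1 hx)
  -- the probability vector
  set a : Fin k × ℕ → ℝ := fun x => ((c x * 2 ^ x.2 : ℕ) : ℝ) / T with hadef
  have hβpos : ∀ x ∈ s, (0:ℝ) < ((c x * 2 ^ x.2 : ℕ) : ℝ) := by
    intro x hx
    have h1 : 0 < c x * 2 ^ x.2 := Nat.mul_pos (hcx x hx) (pow_pos (by norm_num) _)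
    exact_mod_cast h1
  have hT0 : 0 < T := by
    rw [hT]; exact Finset.sum_pos hβpos hsne
  have hT2J : (2:ℝ) ^ J ≤ T := by
    have h1 : ((c x₀ * 2 ^ x₀.2 : ℕ) : ℝ) ≤ T := by
      rw [hT]
      exact Finset.single_le_sum (fun x hx => (hβpos x hx).le) hx₀s
    have h2 : (1:ℝ) ≤ (c x₀ : ℝ) := by exact_mod_cast hcx x₀ hx₀s
    have h3 : (2:ℝ) ^ J = (2:ℝ) ^ x₀.2 := by rw [hJdef, hx₀]
    calc (2:ℝ) ^ J = (2:ℝ) ^ x₀.2 := h3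
      _ ≤ (c x₀ : ℝ) * (2:ℝ) ^ x₀.2 := le_mul_of_one_le_left (by positivity) h2
      _ = ((c x₀ * 2 ^ x₀.2 : ℕ) : ℝ) := by push_cast; ring
      _ ≤ T := h1
  have hapos : ∀ x ∈ s, 0 < a x := fun x hx => div_pos (hβpos x hx) hT0
  have ha1 : ∑ x ∈ s, a x = 1 := by
    simp only [hadef]
    rw [← Finset.sum_div, ← hT, div_self (ne_of_gt hT0)]
  -- the comparison distribution
  set D : ℝ := 2 * (2 * (L:ℝ) + 1) with hDdef
  have hD0 : (0:ℝ) < D := by positivity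
  set p : ℕ → ℝ := fun j => if J < j + (2 * L + 1) then 1 / D else (2:ℝ) ^ j / 2 ^ J
    with hpdef
  have hppos : ∀ j, 0 < p j := by
    intro j
    simp only [hpdef]
    split
    · positivity
    · positivity
  set q : Fin k × ℕ → ℝ := fun x => p x.2 / k with hqdef
  have hk0 : (0:ℝ) < (k:ℝ) := by exact_mod_cast (by omega : 0 < k)
  have hqpos : ∀ x ∈ s, 0 < q x := fun x _ => div_pos (hppos _) hk0
  -- sum of q is at most 1
  have hq1 : ∑ x ∈ s, q x ≤ 1 := by
    set Js := s.image Prod.snd with hJsdef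
    have hsub : s ⊆ Finset.univ ×ˢ Js := by
      intro x hx
      rw [Finset.mem_product]
      exact ⟨Finset.mem_univ _, Finset.mem_image_of_mem Prod.snd hx⟩
    have hqnn : ∀ x : Fin k × ℕ, 0 ≤ q x := fun x => (div_pos (hppos _) hk0).le
    have hJsle : ∀ j ∈ Js, j ≤ J := by
      intro j hj
      obtain ⟨x, hx, rfl⟩ := Finset.mem_image.1 hj
      exact hJle x hx
    have hstep : ∑ x ∈ Finset.univ ×ˢ Js, q x = ∑ j ∈ Js, p j := by
      rw [Finset.sum_product]
      simp only [hqdef]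
      rw [Finset.sum_const, ← Finset.sum_div, Finset.card_univ, Fintype.card_fin,
        nsmul_eq_mul]
      field_simp
    have hhead : ∑ j ∈ Js.filter (fun j => J < j + (2 * L + 1)), p j ≤ 1 / 2 := by
      have hconst : ∀ j ∈ Js.filter (fun j => J < j + (2 * L + 1)), p j = 1 / D := by
        intro j hj
        simp only [hpdef]
        rw [if_pos (Finset.mem_filter.1 hj).2]
      rw [Finset.sum_congr rfl hconst, Finset.sum_const, nsmul_eq_mul]
      have hcard : (Js.filter (fun j => J < j + (2 * L + 1))).card ≤ 2 * L + 1 := by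
        have hsub2 : Js.filter (fun j => J < j + (2 * L + 1)) ⊆ Finset.Icc (J - 2 * L) J := by
          intro j hj
          have h1 := (Finset.mem_filter.1 hj).2
          have h2 := hJsle j (Finset.mem_filter.1 hj).1
          rw [Finset.mem_Icc]
          omega
        calc (Js.filter (fun j => J < j + (2 * L + 1))).card
            ≤ (Finset.Icc (J - 2 * L) J).card := Finset.card_le_card hsub2
          _ = J + 1 - (J - 2 * L) := Nat.card_Icc _ _
          _ ≤ 2 * L + 1 := by omega
      calc ((Js.filter (fun j => J < j + (2 * L + 1))).card : ℝ) * (1 / D)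
          ≤ ((2 * L + 1 : ℕ) : ℝ) * (1 / D) := by
            apply mul_le_mul_of_nonneg_right _ (by positivity)
            exact_mod_cast hcard
        _ = 1 / 2 := by rw [hDdef]; push_cast; field_simp
    have htail : ∑ j ∈ Js.filter (fun j => ¬ J < j + (2 * L + 1)), p j ≤ 1 / 2 := by
      have hconst : ∀ j ∈ Js.filter (fun j => ¬ J < j + (2 * L + 1)),
          p j = (2:ℝ) ^ j / 2 ^ J := by
        intro j hj
        simp only [hpdef]
        rw [if_neg (Finset.mem_filter.1 hj).2]
      rw [Finset.sum_congr rfl hconst]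
      by_cases hJ2L : 2 * L + 1 ≤ J
      · have hsub3 : Js.filter (fun j => ¬ J < j + (2 * L + 1)) ⊆
            Finset.range (J - 2 * L) := by
          intro j hj
          have h1 := (Finset.mem_filter.1 hj).2
          rw [Finset.mem_range]
          omega
        calc ∑ j ∈ Js.filter (fun j => ¬ J < j + (2 * L + 1)), (2:ℝ) ^ j / 2 ^ J
            ≤ ∑ j ∈ Finset.range (J - 2 * L), (2:ℝ) ^ j / 2 ^ J :=
              Finset.sum_le_sum_of_subset_of_nonneg hsub3 (fun j _ _ => by positivity)
          _ = (∑ j ∈ Finset.range (J - 2 * L), (2:ℝ) ^ j) / 2 ^ J := by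
              rw [Finset.sum_div]
          _ = ((2:ℝ) ^ (J - 2 * L) - 1) / 2 ^ J := by
              rw [geom_sum_eq (by norm_num)]; norm_num
          _ ≤ (2:ℝ) ^ (J - 2 * L) / 2 ^ J := by
              apply div_le_div_of_nonneg_right _ (by positivity)
              linarith
          _ ≤ 1 / 2 := by
              have hsplit : (2:ℝ) ^ (J - 2 * L) * 2 ^ (2 * L) = 2 ^ J := by
                rw [← pow_add]
                congr 1
                omega
              rw [div_le_div_iff₀ (by positivity) (by norm_num)]
              have h2L : (2:ℝ) ≤ 2 ^ (2 * L) := by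
                calc (2:ℝ) = 2 ^ 1 := (pow_one 2).symm
                  _ ≤ 2 ^ (2 * L) := pow_le_pow_right₀ (by norm_num) (by omega)
              nlinarith [pow_pos (show (0:ℝ) < 2 by norm_num) (J - 2 * L)]
      · have : Js.filter (fun j => ¬ J < j + (2 * L + 1)) = ∅ := by
          rw [Finset.filter_eq_empty_iff]
          intro j _
          omega
        rw [this, Finset.sum_empty]
        norm_num
    calc ∑ x ∈ s, q x ≤ ∑ x ∈ Finset.univ ×ˢ Js, q x :=
          Finset.sum_le_sum_of_subset_of_nonneg hsub (fun x _ _ => hqnn x)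
      _ = ∑ j ∈ Js, p j := hstep
      _ = ∑ j ∈ Js.filter (fun j => J < j + (2 * L + 1)), p j
          + ∑ j ∈ Js.filter (fun j => ¬ J < j + (2 * L + 1)), p j :=
          (Finset.sum_filter_add_sum_filter_not Js _ _).symm
      _ ≤ 1 / 2 + 1 / 2 := add_le_add hhead htail
      _ = 1 := by norm_num
  -- apply Gibbs
  have hgibbs := gibbs s a q hapos hqpos ha1 hq1
  refine le_trans hgibbs ?_
  -- split off log k
  have hsplit : ∑ x ∈ s, a x * Real.logb 2 (q x)⁻¹
      = Real.logb 2 k + ∑ x ∈ s, a x * Real.logb 2 (p x.2)⁻¹ := by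
    have hterm : ∀ x ∈ s, a x * Real.logb 2 (q x)⁻¹
        = a x * Real.logb 2 k + a x * Real.logb 2 (p x.2)⁻¹ := by
      intro x hx
      have h1 : (q x)⁻¹ = (k:ℝ) / p x.2 := by
        simp only [hqdef]
        rw [inv_div]
      rw [h1, Real.logb_div (ne_of_gt hk0) (ne_of_gt (hppos x.2)),
        Real.logb_inv]
      ring
    rw [Finset.sum_congr rfl hterm, Finset.sum_add_distrib, ← Finset.sum_mul, ha1, one_mul]
  rw [hsplit]
  -- bound the p-part
  set Ch : ℝ := Real.logb 2 D with hChdef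
  have hD1 : (1:ℝ) ≤ D := by rw [hDdef]; push_cast; nlinarith [Nat.cast_nonneg (α := ℝ) L]
  have hCh0 : 0 ≤ Ch := Real.logb_nonneg (by norm_num) hD1
  have hhead2 : ∑ x ∈ s.filter (fun x => J < x.2 + (2 * L + 1)),
      a x * Real.logb 2 (p x.2)⁻¹ ≤ Ch := by
    have hterm : ∀ x ∈ s.filter (fun x => J < x.2 + (2 * L + 1)),
        a x * Real.logb 2 (p x.2)⁻¹ = a x * Ch := by
      intro x hx
      have h1 : p x.2 = 1 / D := by
        simp only [hpdef]
        rw [if_pos (Finset.mem_filter.1 hx).2]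
      rw [h1, one_div, inv_inv]
    rw [Finset.sum_congr rfl hterm, ← Finset.sum_mul]
    have hsum1 : ∑ x ∈ s.filter (fun x => J < x.2 + (2 * L + 1)), a x ≤ 1 := by
      rw [← ha1]
      exact Finset.sum_le_sum_of_subset_of_nonneg (Finset.filter_subset _ _)
        (fun x hx _ => (hapos x hx).le)
    calc (∑ x ∈ s.filter (fun x => J < x.2 + (2 * L + 1)), a x) * Ch
        ≤ 1 * Ch := mul_le_mul_of_nonneg_right hsum1 hCh0
      _ = Ch := one_mul Ch
  have htail2 : ∑ x ∈ s.filter (fun x => ¬ J < x.2 + (2 * L + 1)),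
      a x * Real.logb 2 (p x.2)⁻¹ ≤ 1 := by
    have hterm : ∀ x ∈ s.filter (fun x => ¬ J < x.2 + (2 * L + 1)),
        a x * Real.logb 2 (p x.2)⁻¹
          ≤ (c x : ℝ) * (((2 * L + 1 : ℕ) : ℝ) / 2 ^ (2 * L + 1)) := by
      intro x hx
      obtain ⟨hxs, hxc⟩ := Finset.mem_filter.1 hx
      have hj : x.2 + (2 * L + 1) ≤ J := by omega
      set d : ℕ := J - x.2 with hddef
      have hd1 : 2 * L + 1 ≤ d := by omega
      have hdJ : x.2 + d = J := by omega
      have hp : p x.2 = (2:ℝ) ^ x.2 / 2 ^ J := by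
        simp only [hpdef]
        rw [if_neg hxc]
      have hlogp : Real.logb 2 (p x.2)⁻¹ = (d : ℝ) := by
        rw [hp, inv_div, Real.logb_div (by positivity) (by positivity),
          Real.logb_pow, Real.logb_pow, Real.logb_self_eq_one (by norm_num)]
        have : (J:ℝ) = (x.2:ℝ) + (d:ℝ) := by exact_mod_cast congrArg (Nat.cast : ℕ → ℝ) hdJ.symm
        rw [this]; ring
      have hale : a x ≤ (c x : ℝ) * 2 ^ x.2 / 2 ^ J := by
        simp only [hadef]
        have hcast : ((c x * 2 ^ x.2 : ℕ) : ℝ) = (c x : ℝ) * 2 ^ x.2 := by push_cast; ring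
        rw [hcast]
        apply div_le_div_of_nonneg_left (by positivity) (by positivity) hT2J
      have hdd : (d : ℝ) * 2 ^ x.2 / 2 ^ J = (d : ℝ) / 2 ^ d := by
        have hpow : (2:ℝ) ^ x.2 * 2 ^ d = 2 ^ J := by rw [← pow_add, hdJ]
        field_simp
        nlinarith [pow_pos (show (0:ℝ) < 2 by norm_num) x.2,
          pow_pos (show (0:ℝ) < 2 by norm_num) d]
      have hmono : (d : ℝ) / 2 ^ d ≤ ((2 * L + 1 : ℕ) : ℝ) / 2 ^ (2 * L + 1) := by
        rw [div_le_div_iff₀ (by positivity) (by positivity)]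
        have := nat_weight_mono (show 1 ≤ 2 * L + 1 by omega) hd1
        exact_mod_cast this
      have hcnn : (0:ℝ) ≤ (c x : ℝ) := Nat.cast_nonneg _
      calc a x * Real.logb 2 (p x.2)⁻¹ = a x * (d : ℝ) := by rw [hlogp]
        _ ≤ ((c x : ℝ) * 2 ^ x.2 / 2 ^ J) * (d : ℝ) :=
            mul_le_mul_of_nonneg_right hale (Nat.cast_nonneg d)
        _ = (c x : ℝ) * ((d : ℝ) * 2 ^ x.2 / 2 ^ J) := by ring
        _ = (c x : ℝ) * ((d : ℝ) / 2 ^ d) := by rw [hdd]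
        _ ≤ (c x : ℝ) * (((2 * L + 1 : ℕ) : ℝ) / 2 ^ (2 * L + 1)) :=
            mul_le_mul_of_nonneg_left hmono hcnn
    calc ∑ x ∈ s.filter (fun x => ¬ J < x.2 + (2 * L + 1)), a x * Real.logb 2 (p x.2)⁻¹
        ≤ ∑ x ∈ s.filter (fun x => ¬ J < x.2 + (2 * L + 1)),
            (c x : ℝ) * (((2 * L + 1 : ℕ) : ℝ) / 2 ^ (2 * L + 1)) :=
          Finset.sum_le_sum hterm
      _ = (∑ x ∈ s.filter (fun x => ¬ J < x.2 + (2 * L + 1)), (c x : ℝ))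
            * (((2 * L + 1 : ℕ) : ℝ) / 2 ^ (2 * L + 1)) := by rw [Finset.sum_mul]
      _ ≤ (N : ℝ) * (((2 * L + 1 : ℕ) : ℝ) / 2 ^ (2 * L + 1)) := by
          apply mul_le_mul_of_nonneg_right _ (by positivity)
          have h1 : ∑ x ∈ s.filter (fun x => ¬ J < x.2 + (2 * L + 1)), (c x : ℝ)
              ≤ ∑ x ∈ s, (c x : ℝ) :=
            Finset.sum_le_sum_of_subset_of_nonneg (Finset.filter_subset _ _)
              (fun x _ _ => Nat.cast_nonneg _)
          have h2 : ∑ x ∈ s, ((c x : ℕ) : ℝ) = (N : ℝ) := by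
            rw [← hc]; push_cast; rfl
          linarith
      _ ≤ 1 := by
          have hNle : N ≤ 2 ^ L := le_of_lt hNL
          have hLlt : 2 * L + 1 ≤ 2 ^ (L + 1) := by
            have := L.lt_two_pow_self
            calc 2 * L + 1 ≤ 2 * (L + 1) := by omega
              _ ≤ 2 * 2 ^ L := by omega
              _ = 2 ^ (L + 1) := by rw [pow_succ]; ring
          have hprod : N * (2 * L + 1) ≤ 2 ^ (2 * L + 1) := by
            calc N * (2 * L + 1) ≤ 2 ^ L * 2 ^ (L + 1) := Nat.mul_le_mul hNle hLlt
              _ = 2 ^ (2 * L + 1) := by rw [← pow_add]; congr 1; omega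
          have hprodR : (N:ℝ) * ((2 * L + 1 : ℕ) : ℝ) ≤ (2:ℝ) ^ (2 * L + 1) := by
            exact_mod_cast hprod
          rw [mul_div_assoc', div_le_one (by positivity)]
          exact hprodR
  -- combine everything
  have hbound : ∑ x ∈ s, a x * Real.logb 2 (p x.2)⁻¹ ≤ Ch + 1 := by
    rw [← Finset.sum_filter_add_sum_filter_not s (fun x => J < x.2 + (2 * L + 1))]
    exact add_le_add hhead2 htail2
  -- numeric estimates on Ch
  have hll1 : (1:ℝ) ≤ Real.logb 2 N := by
    have : Real.logb 2 (2:ℝ) ≤ Real.logb 2 N :=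
      Real.logb_le_logb_of_le (by norm_num) (by norm_num) (by exact_mod_cast hN)
    rwa [Real.logb_self_eq_one (by norm_num)] at this
  have hlk1 : (1:ℝ) ≤ Real.logb 2 k := by
    have : Real.logb 2 (2:ℝ) ≤ Real.logb 2 k :=
      Real.logb_le_logb_of_le (by norm_num) (by norm_num) (by exact_mod_cast hk)
    rwa [Real.logb_self_eq_one (by norm_num)] at this
  have hll0 : 0 ≤ Real.logb 2 (Real.logb 2 N) := Real.logb_nonneg (by norm_num) hll1
  have hlogN : ((Nat.log 2 N : ℕ) : ℝ) ≤ Real.logb 2 N := by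
    have h1 : ((2:ℝ) ^ (Nat.log 2 N)) ≤ (N : ℝ) := by
      exact_mod_cast Nat.pow_log_le_self 2 (by omega)
    have h2 : Real.logb 2 ((2:ℝ) ^ (Nat.log 2 N)) = (Nat.log 2 N : ℝ) := by
      rw [Real.logb_pow, Real.logb_self_eq_one (by norm_num), mul_one]
    rw [← h2]
    exact Real.logb_le_logb_of_le (by norm_num) (by positivity) h1
  have hLreal : (L : ℝ) ≤ 2 * Real.logb 2 N := by
    have : (L : ℝ) = ((Nat.log 2 N : ℕ) : ℝ) + 1 := by rw [hLdef]; push_cast; ring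
    linarith
  have hD10 : D ≤ 10 * Real.logb 2 N := by
    rw [hDdef]
    linarith
  have hCh : Ch ≤ 4 + Real.logb 2 (Real.logb 2 N) := by
    have h1 : Ch ≤ Real.logb 2 (10 * Real.logb 2 N) :=
      Real.logb_le_logb_of_le (by norm_num) hD0 hD10
    have h2 : Real.logb 2 (10 * Real.logb 2 N)
        = Real.logb 2 (10:ℝ) + Real.logb 2 (Real.logb 2 N) := by
      rw [Real.logb_mul (by norm_num) (by linarith)]
    have h10 : Real.logb 2 (10:ℝ) ≤ 4 := by
      have h3 : Real.logb 2 (10:ℝ) ≤ Real.logb 2 (16:ℝ) :=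
        Real.logb_le_logb_of_le (by norm_num) (by norm_num) (by norm_num)
      have h16 : Real.logb 2 (16:ℝ) = 4 := by
        rw [show (16:ℝ) = 2^(4:ℕ) by norm_num, Real.logb_pow,
          Real.logb_self_eq_one (by norm_num)]
        norm_num
      linarith
    linarith
  linarith
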